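/- arXiv:1607.05831 — 4 statements merged into one kernel-verified Lean document; each statement's English description precedes it below -/
import Mathlib

section
/- Let a > 0 and b ∈ ℝ, and set h(s) = a·e^{−bs} for s ≥ 0. Let f, g : [0,∞) → [0,∞) be measurable functions such that ∫_0^t f(s) ds < ∞ for every t ≥ 0, and assume that for every t ≥ 0, f(t) ≤ g(t) + ∫_0^t f(t−s) h(s) ds. Then for every t ≥ 0, f(t) ≤ g(t) + a·∫_0^t g(t−s) e^{(a−b)s} ds. -/
open MeasureTheory Set ENNReal

namespace ExpGronwallAux


/-- Reflection of a lintegral over `Ioc 0 t`. -/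
lemma refl_lintegral (F : ℝ → ℝ≥0∞) (hF : Measurable F) (t : ℝ) :
    ∫⁻ s in Ioc 0 t, F (t - s) = ∫⁻ s in Ioc 0 t, F s := by
  rw [← lintegral_indicator measurableSet_Ioc,
    ← Measure.restrict_congr_set Ico_ae_eq_Ioc,
    ← lintegral_indicator measurableSet_Ico]
  have h1 : ∀ s, (Ioc (0:ℝ) t).indicator (fun s => F (t - s)) s
      = (Ico (0:ℝ) t).indicator F (t - s) := by
    intro s
    simp only [indicator_apply, mem_Ioc, mem_Ico]
    by_cases h : 0 < s ∧ s ≤ t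
    · rw [if_pos h, if_pos ⟨by linarith [h.2], by linarith [h.1]⟩]
    · rw [if_neg h, if_neg fun h' => h ⟨by linarith [h'.2], by linarith [h'.1]⟩]
  simp_rw [h1]
  exact (Measure.measurePreserving_sub_left volume t).lintegral_comp
    (hF.indicator measurableSet_Ico)



/-- Associativity-type rearrangement for the convolution. -/
lemma conv_assoc (F H K' : ℝ → ℝ≥0∞) (hF : Measurable F) (hH : Measurable H)
    (hK : Measurable K') (t : ℝ) :
    ∫⁻ s in Ioc 0 t, (∫⁻ r in Ioc 0 (t - s), F (t - s - r) * H r) * K' s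
      = ∫⁻ u in Ioc 0 t, F (t - u) * (∫⁻ s in Ioo 0 u, H (u - s) * K' s) := by
  set S : Set (ℝ × ℝ) := {p | 0 < p.1 ∧ p.1 < p.2 ∧ p.2 ≤ t} with hS
  have hSmeas : MeasurableSet S := by
    apply MeasurableSet.inter (measurableSet_lt measurable_const measurable_fst)
    exact (measurableSet_lt measurable_fst measurable_snd).inter
      (measurableSet_le measurable_snd measurable_const)
  set Φ : ℝ × ℝ → ℝ≥0∞ := S.indicator (fun p => F (t - p.2) * H (p.2 - p.1) * K' p.1) with hΦ
  have hΦmeas : Measurable Φ := by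
    apply Measurable.indicator _ hSmeas
    fun_prop
  have stepA : ∫⁻ s in Ioc 0 t, (∫⁻ r in Ioc 0 (t - s), F (t - s - r) * H r) * K' s
      = ∫⁻ s, ∫⁻ u, Φ (s, u) := by
    rw [← lintegral_indicator measurableSet_Ioc]
    refine lintegral_congr fun s => ?_
    by_cases hs : s ∈ Ioc (0:ℝ) t
    · rw [indicator_of_mem hs]
      have key : ∀ u, Φ (s, u)
          = (fun r => (Ioc (0:ℝ) (t - s)).indicator
              (fun r => F (t - s - r) * H r * K' s) r) (u - s) := by
        intro u
        simp only [hΦ, indicator_apply, hS, mem_setOf_eq, mem_Ioc]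
        by_cases h : s < u ∧ u ≤ t
        · rw [if_pos ⟨hs.1, h⟩, if_pos ⟨by linarith [h.1], by linarith [h.2]⟩]
          have : t - s - (u - s) = t - u := by ring
          rw [this]
        · rw [if_neg fun h' => h ⟨h'.2.1, h'.2.2⟩,
            if_neg fun h' => h ⟨by linarith [h'.1], by linarith [h'.2]⟩]
      calc (∫⁻ r in Ioc 0 (t - s), F (t - s - r) * H r) * K' s
          = ∫⁻ r in Ioc 0 (t - s), F (t - s - r) * H r * K' s := by
            rw [← lintegral_mul_const _
              (by fun_prop : Measurable fun r => F (t - s - r) * H r)]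
        _ = ∫⁻ r, (Ioc (0:ℝ) (t - s)).indicator (fun r => F (t - s - r) * H r * K' s) r := by
            rw [lintegral_indicator measurableSet_Ioc]
        _ = ∫⁻ u, Φ (s, u) := by
            rw [← lintegral_sub_right_eq_self
              (fun r => (Ioc (0:ℝ) (t - s)).indicator (fun r => F (t - s - r) * H r * K' s) r) s]
            exact (lintegral_congr fun u => (key u).symm)
    · rw [indicator_of_notMem hs]
      have key : ∀ u, Φ (s, u) = 0 := by
        intro u
        simp only [hΦ, hS, indicator_apply, mem_setOf_eq]
        rw [if_neg]
        rintro ⟨h1, h2, h3⟩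
        exact hs ⟨h1, by linarith⟩
      simp only [key, lintegral_zero]
  have stepB : ∫⁻ s, ∫⁻ u, Φ (s, u) = ∫⁻ u, ∫⁻ s, Φ (s, u) :=
    lintegral_lintegral_swap hΦmeas.aemeasurable
  have stepC : ∫⁻ u, ∫⁻ s, Φ (s, u)
      = ∫⁻ u in Ioc 0 t, F (t - u) * (∫⁻ s in Ioo 0 u, H (u - s) * K' s) := by
    rw [← lintegral_indicator measurableSet_Ioc]
    refine lintegral_congr fun u => ?_
    by_cases hu : u ∈ Ioc (0:ℝ) t
    · rw [indicator_of_mem hu]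
      have key : ∀ s, Φ (s, u)
          = (Ioo (0:ℝ) u).indicator (fun s => F (t - u) * (H (u - s) * K' s)) s := by
        intro s
        simp only [hΦ, hS, indicator_apply, mem_setOf_eq, mem_Ioo]
        by_cases h : 0 < s ∧ s < u
        · rw [if_pos ⟨h.1, h.2, hu.2⟩, if_pos h, mul_assoc]
        · rw [if_neg fun h' => h ⟨h'.1, h'.2.1⟩, if_neg h]
      simp_rw [key]
      rw [lintegral_indicator measurableSet_Ioo,
        lintegral_const_mul _ (by fun_prop : Measurable fun s => H (u - s) * K' s)]
    · rw [indicator_of_notMem hu]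
      have key : ∀ s, Φ (s, u) = 0 := by
        intro s
        simp only [hΦ, hS, indicator_apply, mem_setOf_eq]
        rw [if_neg]
        rintro ⟨h1, h2, h3⟩
        exact hu ⟨by linarith, h3⟩
      simp only [key, lintegral_zero]
  rw [stepA, stepB, stepC]



noncomputable def Ker (a b : ℝ) (n : ℕ) (s : ℝ) : ℝ≥0∞ :=
  ENNReal.ofReal (a ^ (n + 1) * s ^ n * Real.exp (-b * s) / n.factorial)

lemma Ker_measurable (a b : ℝ) (n : ℕ) : Measurable (Ker a b n) := by
  unfold Ker; fun_prop

lemma Ker_zero (a b : ℝ) (s : ℝ) : Ker a b 0 s = ENNReal.ofReal (a * Real.exp (-b * s)) := by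
  simp [Ker]

lemma Ker_conv (a b : ℝ) (ha : 0 ≤ a) (n : ℕ) (u : ℝ) (hu : 0 < u) :
    ∫⁻ s in Ioo 0 u, Ker a b 0 (u - s) * Ker a b n s = Ker a b (n + 1) u := by
  have hc : 0 ≤ a ^ (n + 2) * Real.exp (-b * u) / n.factorial := by
    apply div_nonneg _ (Nat.cast_nonneg _)
    exact mul_nonneg (pow_nonneg ha _) (Real.exp_pos _).le
  have hpt : ∀ s ∈ Ioo (0:ℝ) u, Ker a b 0 (u - s) * Ker a b n s
      = ENNReal.ofReal ((a ^ (n + 2) * Real.exp (-b * u) / n.factorial) * s ^ n) := by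
    intro s hs
    rw [Ker_zero, Ker, ← ENNReal.ofReal_mul (mul_nonneg ha (Real.exp_pos _).le)]
    congr 1
    rw [show a * Real.exp (-b * (u - s)) * (a ^ (n + 1) * s ^ n * Real.exp (-b * s) / n.factorial)
        = (a ^ (n + 2) / n.factorial * s ^ n) * (Real.exp (-b * (u - s)) * Real.exp (-b * s))
        by ring, ← Real.exp_add]
    ring_nf
  rw [setLIntegral_congr_fun measurableSet_Ioo hpt]
  rw [← ofReal_integral_eq_lintegral_ofReal]
  · rw [Measure.restrict_congr_set Ioo_ae_eq_Ioc,
      ← intervalIntegral.integral_of_le hu.le, intervalIntegral.integral_const_mul,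
      integral_pow]
    unfold Ker
    congr 1
    rw [Nat.factorial_succ]
    push_cast
    have h1 : (n.factorial : ℝ) ≠ 0 := by positivity
    have h2 : (n : ℝ) + 1 ≠ 0 := by positivity
    field_simp
    ring
  · rw [Measure.restrict_congr_set Ioo_ae_eq_Ioc]
    apply Continuous.integrableOn_Ioc
    fun_prop
  · refine (ae_restrict_iff' measurableSet_Ioo).mpr (Filter.Eventually.of_forall fun s hs => ?_)
    exact mul_nonneg hc (pow_nonneg hs.1.le _)

end ExpGronwallAux

open ExpGronwallAux

/-- Exponential-kernel Grönwall lemma: if `f ≤ g + f ∗ h` with `h s = a·exp(−b·s)`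
(integrals taken in `[0,∞]`), then `f(t) ≤ g(t) + a·∫_0^t g(t−s)·exp((a−b)·s) ds`. -/
theorem exponential_kernel_convolution_bound
    (a b : ℝ) (ha : 0 < a) (f g : ℝ → ℝ)
    (hfm : Measurable f) (hgm : Measurable g)
    (hf0 : ∀ t, 0 ≤ f t) (hg0 : ∀ t, 0 ≤ g t)
    (hfint : ∀ t ≥ (0:ℝ), (∫⁻ s in Ioc (0:ℝ) t, ENNReal.ofReal (f s)) < ⊤)
    (hineq : ∀ t ≥ (0:ℝ), ENNReal.ofReal (f t) ≤ ENNReal.ofReal (g t) +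
      ∫⁻ s in Ioc (0:ℝ) t,
        ENNReal.ofReal (f (t - s)) * ENNReal.ofReal (a * Real.exp (-b * s))) :
    ∀ t ≥ (0:ℝ), ENNReal.ofReal (f t) ≤ ENNReal.ofReal (g t) +
      ENNReal.ofReal a * ∫⁻ s in Ioc (0:ℝ) t,
        ENNReal.ofReal (g (t - s)) * ENNReal.ofReal (Real.exp ((a - b) * s)) := by
  set F : ℝ → ℝ≥0∞ := fun t => ENNReal.ofReal (f t) with hF
  set G : ℝ → ℝ≥0∞ := fun t => ENNReal.ofReal (g t) with hG
  set K : ℕ → ℝ → ℝ≥0∞ := Ker a b with hK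
  have hFm : Measurable F := hfm.ennreal_ofReal
  have hGm : Measurable G := hgm.ennreal_ofReal
  have hKm : ∀ n, Measurable (K n) := Ker_measurable a b
  have hineq0 : ∀ t ≥ (0:ℝ), F t ≤ G t + ∫⁻ s in Ioc 0 t, F (t - s) * K 0 s := by
    intro t ht
    simp only [hK, Ker_zero]
    exact hineq t ht
  -- iteration
  have iter : ∀ n : ℕ, ∀ t ≥ (0:ℝ),
      F t ≤ G t + (∑ k ∈ Finset.range n, ∫⁻ s in Ioc 0 t, G (t - s) * K k s)
        + ∫⁻ s in Ioc 0 t, F (t - s) * K n s := by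
    intro n
    induction n with
    | zero => intro t ht; simpa using hineq0 t ht
    | succ n ih =>
      intro t ht
      have step : ∫⁻ s in Ioc 0 t, F (t - s) * K n s
          ≤ (∫⁻ s in Ioc 0 t, G (t - s) * K n s)
            + ∫⁻ s in Ioc 0 t, F (t - s) * K (n + 1) s := by
        have mono1 : ∫⁻ s in Ioc 0 t, F (t - s) * K n s
            ≤ ∫⁻ s in Ioc 0 t,
                (G (t - s) + ∫⁻ r in Ioc 0 (t - s), F (t - s - r) * K 0 r) * K n s := by
          refine lintegral_mono_ae ((ae_restrict_iff' measurableSet_Ioc).mpr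
            (Filter.Eventually.of_forall fun s hs => ?_))
          exact mul_le_mul_left (hineq0 (t - s) (by linarith [hs.2])) _
        have split : ∫⁻ s in Ioc 0 t,
              (G (t - s) + ∫⁻ r in Ioc 0 (t - s), F (t - s - r) * K 0 r) * K n s
            = (∫⁻ s in Ioc 0 t, G (t - s) * K n s)
              + ∫⁻ s in Ioc 0 t, (∫⁻ r in Ioc 0 (t - s), F (t - s - r) * K 0 r) * K n s := by
          simp_rw [add_mul]
          exact lintegral_add_left (by fun_prop) _
        have assoc : ∫⁻ s in Ioc 0 t, (∫⁻ r in Ioc 0 (t - s), F (t - s - r) * K 0 r) * K n s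
            = ∫⁻ s in Ioc 0 t, F (t - s) * K (n + 1) s := by
          rw [conv_assoc F (K 0) (K n) hFm (hKm 0) (hKm n) t]
          refine setLIntegral_congr_fun measurableSet_Ioc
            (fun u hu => ?_)
          rw [Ker_conv a b ha.le n u hu.1]
        calc ∫⁻ s in Ioc 0 t, F (t - s) * K n s
            ≤ _ := mono1
          _ = _ := split
          _ = _ := by rw [assoc]
      calc F t ≤ G t + (∑ k ∈ Finset.range n, ∫⁻ s in Ioc 0 t, G (t - s) * K k s)
            + ∫⁻ s in Ioc 0 t, F (t - s) * K n s := ih t ht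
        _ ≤ G t + (∑ k ∈ Finset.range n, ∫⁻ s in Ioc 0 t, G (t - s) * K k s)
            + ((∫⁻ s in Ioc 0 t, G (t - s) * K n s)
              + ∫⁻ s in Ioc 0 t, F (t - s) * K (n + 1) s) := add_le_add_right step _
        _ = G t + (∑ k ∈ Finset.range (n + 1), ∫⁻ s in Ioc 0 t, G (t - s) * K k s)
            + ∫⁻ s in Ioc 0 t, F (t - s) * K (n + 1) s := by
            rw [Finset.sum_range_succ]; ring
  intro t ht
  -- remainder bound
  set ρ : ℕ → ℝ≥0∞ := fun n =>
    ENNReal.ofReal (a * Real.exp (|b| * t) * ((a * t) ^ n / n.factorial))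
      * ∫⁻ s in Ioc 0 t, F s with hρ
  have bound : ∀ n : ℕ, ∫⁻ s in Ioc 0 t, F (t - s) * K n s ≤ ρ n := by
    intro n
    have hker : ∀ s ∈ Ioc (0:ℝ) t, K n s
        ≤ ENNReal.ofReal (a * Real.exp (|b| * t) * ((a * t) ^ n / n.factorial)) := by
      intro s hs
      simp only [hK, Ker]
      apply ENNReal.ofReal_le_ofReal
      have hexp : Real.exp (-b * s) ≤ Real.exp (|b| * t) := by
        apply Real.exp_le_exp.mpr
        calc -b * s ≤ |b| * s := mul_le_mul_of_nonneg_right (neg_le_abs b) hs.1.le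
          _ ≤ |b| * t := mul_le_mul_of_nonneg_left hs.2 (abs_nonneg b)
      calc a ^ (n + 1) * s ^ n * Real.exp (-b * s) / n.factorial
          ≤ a ^ (n + 1) * t ^ n * Real.exp (|b| * t) / n.factorial := by
            gcongr
            all_goals first
              | exact pow_nonneg ha.le _
              | exact hs.1.le
              | exact hs.2
              | exact hexp
        _ = a * Real.exp (|b| * t) * ((a * t) ^ n / n.factorial) := by
            rw [mul_pow]; ring
    calc ∫⁻ s in Ioc 0 t, F (t - s) * K n s
        ≤ ∫⁻ s in Ioc 0 t, F (t - s)
            * ENNReal.ofReal (a * Real.exp (|b| * t) * ((a * t) ^ n / n.factorial)) := by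
          refine lintegral_mono_ae ((ae_restrict_iff' measurableSet_Ioc).mpr
            (Filter.Eventually.of_forall fun s hs => ?_))
          exact mul_le_mul_right (hker s hs) _
      _ = (∫⁻ s in Ioc 0 t, F (t - s))
            * ENNReal.ofReal (a * Real.exp (|b| * t) * ((a * t) ^ n / n.factorial)) :=
          lintegral_mul_const _ (by fun_prop)
      _ = ρ n := by rw [refl_lintegral F hFm t, hρ, mul_comm]
  have hCf : (∫⁻ s in Ioc 0 t, F s) ≠ ⊤ := (hfint t ht).ne
  have hρ0 : Filter.Tendsto ρ Filter.atTop (nhds 0) := by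
    have h1 : Filter.Tendsto (fun n : ℕ => (a * t) ^ n / (n.factorial : ℝ))
        Filter.atTop (nhds 0) := FloorSemiring.tendsto_pow_div_factorial_atTop (a * t)
    have h2 := h1.const_mul (a * Real.exp (|b| * t))
    rw [mul_zero] at h2
    have h3 := ENNReal.tendsto_ofReal h2
    rw [ENNReal.ofReal_zero] at h3
    have h4 := ENNReal.Tendsto.mul_const h3 (Or.inr hCf)
    rwa [zero_mul] at h4
  -- pass to the limit
  have key : F t ≤ G t + ∑' k : ℕ, ∫⁻ s in Ioc 0 t, G (t - s) * K k s := by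
    refine ge_of_tendsto' (x := (Filter.atTop : Filter ℕ))
      (f := fun n : ℕ => (G t + ∑' k : ℕ, ∫⁻ s in Ioc 0 t, G (t - s) * K k s) + ρ n)
      ?_ fun n => ?_
    · have := Filter.Tendsto.const_add
        (G t + ∑' k : ℕ, ∫⁻ s in Ioc 0 t, G (t - s) * K k s) hρ0
      rwa [add_zero] at this
    · calc F t ≤ G t + (∑ k ∈ Finset.range n, ∫⁻ s in Ioc 0 t, G (t - s) * K k s)
            + ∫⁻ s in Ioc 0 t, F (t - s) * K n s := iter n t ht
        _ ≤ G t + (∑' k : ℕ, ∫⁻ s in Ioc 0 t, G (t - s) * K k s) + ρ n :=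
            add_le_add (add_le_add_right (ENNReal.sum_le_tsum _) _) (bound n)
  -- compute the series
  have tsum_eq : ∑' k : ℕ, ∫⁻ s in Ioc 0 t, G (t - s) * K k s
      = ENNReal.ofReal a
        * ∫⁻ s in Ioc 0 t, G (t - s) * ENNReal.ofReal (Real.exp ((a - b) * s)) := by
    rw [← lintegral_tsum fun k =>
      ((by fun_prop : Measurable fun s => G (t - s) * K k s)).aemeasurable]
    have hpt : ∀ s ∈ Ioc (0:ℝ) t, ∑' k : ℕ, G (t - s) * K k s
        = ENNReal.ofReal a * (G (t - s) * ENNReal.ofReal (Real.exp ((a - b) * s))) := by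
      intro s hs
      rw [ENNReal.tsum_mul_left]
      have hfun : (fun k : ℕ => a ^ (k + 1) * s ^ k * Real.exp (-b * s) / k.factorial)
          = fun k : ℕ => (a * Real.exp (-b * s)) * ((a * s) ^ k / k.factorial) := by
        funext k; rw [mul_pow]; ring
      have hsum : ∑' k : ℕ, K k s = ENNReal.ofReal (a * Real.exp ((a - b) * s)) := by
        simp only [hK, Ker]
        rw [← ENNReal.ofReal_tsum_of_nonneg]
        · congr 1
          rw [hfun, tsum_mul_left]
          have hexp : ∑' k : ℕ, (a * s) ^ k / (k.factorial : ℝ) = Real.exp (a * s) := by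
            rw [Real.exp_eq_exp_ℝ, NormedSpace.exp_eq_tsum_div]
          rw [hexp, mul_assoc, ← Real.exp_add]
          ring_nf
        · intro k
          have : (0:ℝ) ≤ a ^ (k + 1) * s ^ k * Real.exp (-b * s) := by
            apply mul_nonneg (mul_nonneg (pow_nonneg ha.le _) (pow_nonneg hs.1.le _))
            exact (Real.exp_pos _).le
          exact div_nonneg this (Nat.cast_nonneg _)
        · rw [hfun]
          exact (Real.summable_pow_div_factorial (a * s)).mul_left _
      rw [hsum, ENNReal.ofReal_mul ha.le]
      ring
    rw [setLIntegral_congr_fun measurableSet_Ioc hpt]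
    rw [lintegral_const_mul' _ _ ENNReal.ofReal_ne_top]
  rw [tsum_eq] at key
  exact key
end

section
/- Let θ* > 0 and T > 0. For each integer n ≥ 1, let X_n have Poisson distribution of parameter n·√θ*·T. Then for every natural number p ≥ 1, the p-th moment converges: E[(√n·((X_n/(nT))² − θ*))^p] → ∫_ℝ x^p dν(x) as n → ∞, where ν is the Gaussian measure on ℝ with mean 0 and variance 4·(θ*)^{3/2}/T. -/
open scoped NNReal ENNReal
open MeasureTheory ProbabilityTheory Filter Topology Real

namespace ToyMLE


lemma exists_pow_le_two_pow (m : ℕ) : ∃ C : ℝ, ∀ k : ℕ, (k:ℝ)^m ≤ C * 2^k := by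
  have h : Tendsto (fun n : ℕ => (n:ℝ)^m / 2^n) atTop (𝓝 0) :=
    tendsto_pow_const_div_const_pow_of_one_lt m (by norm_num)
  obtain ⟨C, hC⟩ := h.bddAbove_range
  refine ⟨C, fun k => ?_⟩
  have hk : (k:ℝ)^m / 2^k ≤ C := hC ⟨k, rfl⟩
  have h2 : (0:ℝ) < 2^k := by positivity
  calc (k:ℝ)^m = ((k:ℝ)^m / 2^k) * 2^k := by field_simp
    _ ≤ C * 2^k := by apply mul_le_mul_of_nonneg_right hk h2.le

lemma summable_pm_pow (r : ℝ≥0) (m : ℕ) :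
    Summable (fun k : ℕ => poissonPMFReal r k * (k:ℝ)^m) := by
  obtain ⟨C, hC⟩ := exists_pow_le_two_pow m
  have hC0 : 0 ≤ C := by
    have h1 := hC 1
    norm_num at h1
    linarith
  refine Summable.of_nonneg_of_le
    (fun k => mul_nonneg poissonPMFReal_nonneg (by positivity)) (fun k => ?_)
    ((Real.summable_pow_div_factorial (2*(r:ℝ))).mul_left (Real.exp (-(r:ℝ)) * C))
  · unfold poissonPMFReal
    have h1 : (k:ℝ)^m ≤ C * 2^k := hC k
    have h2 : (0:ℝ) ≤ (r:ℝ)^k / k.factorial := by positivity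
    calc Real.exp (-r) * (r:ℝ)^k / k.factorial * (k:ℝ)^m
        ≤ Real.exp (-r) * (r:ℝ)^k / k.factorial * (C * 2^k) := by
          apply mul_le_mul_of_nonneg_left h1 (by positivity)
      _ = Real.exp (-(r:ℝ)) * C * ((2*(r:ℝ))^k / k.factorial) := by
          rw [mul_pow]; ring

/-- master summability: pmf times `k^j * (k+c)^m`. -/
lemma summable_pm_pow_add_pow (r : ℝ≥0) (c : ℝ) (j m : ℕ) :
    Summable (fun k : ℕ => poissonPMFReal r k * ((k:ℝ)^j * ((k:ℝ) + c)^m)) := by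
  have hfun : ∀ k : ℕ, poissonPMFReal r k * ((k:ℝ)^j * ((k:ℝ) + c)^m)
      = ∑ i ∈ Finset.range (m+1),
        (c^(m-i) * (m.choose i)) * (poissonPMFReal r k * (k:ℝ)^(i+j)) := by
    intro k
    rw [add_pow]
    rw [Finset.mul_sum, Finset.mul_sum]
    apply Finset.sum_congr rfl
    intro i _
    rw [pow_add]
    ring
  apply Summable.congr _ (fun k => (hfun k).symm)
  apply summable_sum
  intro i _
  exact (summable_pm_pow r (i+j)).mul_left _

lemma summable_pm_pow_sub_pow (r : ℝ≥0) (c : ℝ) (j m : ℕ) :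
    Summable (fun k : ℕ => poissonPMFReal r k * ((k:ℝ)^j * ((k:ℝ) - c)^m)) := by
  have := summable_pm_pow_add_pow r (-c) j m
  simpa [sub_eq_add_neg] using this

lemma summable_pm_abs_sub_pow (r : ℝ≥0) (c : ℝ) (m : ℕ) :
    Summable (fun k : ℕ => poissonPMFReal r k * |(k:ℝ) - c|^m) := by
  refine Summable.of_nonneg_of_le
    (fun k => mul_nonneg poissonPMFReal_nonneg (by positivity)) (fun k => ?_)
    ((summable_pm_pow_add_pow r |c| 0 m).congr (fun k => by rw [pow_zero, one_mul]))
  · 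
    apply mul_le_mul_of_nonneg_left _ poissonPMFReal_nonneg
    apply pow_le_pow_left₀ (abs_nonneg _)
    calc |(k:ℝ) - c| ≤ |(k:ℝ)| + |c| := abs_sub _ _
      _ = (k:ℝ) + |c| := by rw [abs_of_nonneg (Nat.cast_nonneg k)]

lemma integrable_poisson_const_mul_sub_pow (r : ℝ≥0) (d c : ℝ) (m : ℕ) :
    Integrable (fun k : ℕ => d * ((k:ℝ) - c)^m) (poissonMeasure r) := by
  refine ⟨(measurable_from_top).aestronglyMeasurable, ?_⟩
  rw [HasFiniteIntegral]
  rw [lintegral_countable']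
  have hsing : ∀ k : ℕ, (poissonMeasure r) {k} = ENNReal.ofReal (poissonPMFReal r k) := by
    intro k
    rw [poissonMeasure_singleton]
    rfl
  have heq : ∀ k : ℕ, ‖d * ((k:ℝ) - c)^m‖ₑ * (poissonMeasure r) {k}
      = ENNReal.ofReal (poissonPMFReal r k * (|d| * |(k:ℝ) - c|^m)) := by
    intro k
    rw [hsing k, Real.enorm_eq_ofReal_abs, ← ENNReal.ofReal_mul (abs_nonneg _)]
    congr 1
    rw [abs_mul, abs_pow]
    ring
  rw [tsum_congr heq]
  rw [← ENNReal.ofReal_tsum_of_nonneg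
    (fun k => mul_nonneg poissonPMFReal_nonneg (by positivity))
    (Summable.congr ((summable_pm_abs_sub_pow r c m).mul_left |d|) (fun k => by ring))]
  exact ENNReal.ofReal_lt_top



/-- Central moments of the Poisson distribution, as a tsum. -/
noncomputable def pcm (r : ℝ≥0) (q : ℕ) : ℝ :=
  ∑' k : ℕ, poissonPMFReal r k * ((k:ℝ) - (r:ℝ))^q

lemma summable_pcm (r : ℝ≥0) (c : ℝ) (q : ℕ) :
    Summable (fun k : ℕ => poissonPMFReal r k * ((k:ℝ) - c)^q) := by
  have := summable_pm_pow_sub_pow r c 0 q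
  simpa using this

lemma integral_poisson_sub_pow (r : ℝ≥0) (d c : ℝ) (m : ℕ) :
    ∫ k, d * ((k:ℝ) - c)^m ∂(poissonMeasure r)
      = d * ∑' k : ℕ, poissonPMFReal r k * ((k:ℝ) - c)^m := by
  rw [integral_poissonMeasure' (integrable_poisson_const_mul_sub_pow r d c m)]
  rw [← tsum_mul_left]
  apply tsum_congr
  intro k
  have h : ((poissonPMF r) k).toReal = poissonPMFReal r k := by
    simp only [poissonPMF]
    exact ENNReal.toReal_ofReal poissonPMFReal_nonneg
  rw [smul_eq_mul]; unfold poissonPMFReal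
  ring

lemma pcm_zero (r : ℝ≥0) : pcm r 0 = 1 := by
  unfold pcm
  simpa [poissonPMFReal] using (poissonPMFRealSum r).tsum_eq

lemma pm_succ_mul (r : ℝ≥0) (j : ℕ) :
    poissonPMFReal r (j+1) * ((j:ℝ)+1) = (r:ℝ) * poissonPMFReal r j := by
  unfold poissonPMFReal
  rw [Nat.factorial_succ]
  push_cast
  have h1 : ((j:ℝ) + 1) ≠ 0 := by positivity
  have h2 : (j.factorial : ℝ) ≠ 0 := by exact_mod_cast j.factorial_ne_zero
  field_simp
  ring

lemma pcm_rec (r : ℝ≥0) (q : ℕ) :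
    pcm r (q+1) = (r:ℝ) * ∑ i ∈ Finset.range q, (q.choose i : ℝ) * pcm r i := by
  have hS0 : Summable (fun k : ℕ => poissonPMFReal r k * ((k:ℝ) - (r:ℝ))^q) :=
    summable_pcm r _ q
  have hS1 : Summable (fun k : ℕ => poissonPMFReal r k * ((k:ℝ) * ((k:ℝ) - (r:ℝ))^q)) := by
    simpa using summable_pm_pow_sub_pow r (r:ℝ) 1 q
  -- step 1 : split
  have step1 : pcm r (q+1)
      = (∑' k : ℕ, poissonPMFReal r k * ((k:ℝ) * ((k:ℝ) - (r:ℝ))^q)) - (r:ℝ) * pcm r q := by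
    unfold pcm
    rw [← tsum_mul_left, ← Summable.tsum_sub hS1 (hS0.mul_left (r:ℝ))]
    apply tsum_congr
    intro k
    ring
  -- step 2 : reindex
  have step2 : (∑' k : ℕ, poissonPMFReal r k * ((k:ℝ) * ((k:ℝ) - (r:ℝ))^q))
      = (r:ℝ) * ∑' j : ℕ, poissonPMFReal r j * (((j:ℝ) + 1) - (r:ℝ))^q := by
    rw [Summable.tsum_eq_zero_add hS1]
    simp only [Nat.cast_zero, zero_mul, mul_zero, zero_add]
    rw [← tsum_mul_left]
    apply tsum_congr
    intro j
    push_cast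
    have := pm_succ_mul r j
    calc poissonPMFReal r (j+1) * (((j:ℝ)+1) * (((j:ℝ)+1) - (r:ℝ))^q)
        = (poissonPMFReal r (j+1) * ((j:ℝ)+1)) * (((j:ℝ)+1) - (r:ℝ))^q := by ring
      _ = ((r:ℝ) * poissonPMFReal r j) * (((j:ℝ)+1) - (r:ℝ))^q := by rw [this]
      _ = (r:ℝ) * (poissonPMFReal r j * (((j:ℝ) + 1) - (r:ℝ))^q) := by ring
  -- step 3 : combine and expand
  have hS1' : Summable (fun j : ℕ => poissonPMFReal r j * (((j:ℝ) + 1) - (r:ℝ))^q) := by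
    have := summable_pcm r ((r:ℝ) - 1) q
    apply this.congr
    intro k
    congr 2
    ring
  rw [step1, step2]
  have step3 : (∑' j : ℕ, poissonPMFReal r j * (((j:ℝ) + 1) - (r:ℝ))^q) - pcm r q
      = ∑ i ∈ Finset.range q, (q.choose i : ℝ) * pcm r i := by
    unfold pcm
    rw [← Summable.tsum_sub hS1' hS0]
    have hptwise : ∀ k : ℕ, poissonPMFReal r k * (((k:ℝ) + 1) - (r:ℝ))^q
        - poissonPMFReal r k * ((k:ℝ) - (r:ℝ))^q
        = ∑ i ∈ Finset.range q, (q.choose i : ℝ) * (poissonPMFReal r k * ((k:ℝ) - (r:ℝ))^i) := by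
      intro k
      set x := (k:ℝ) - (r:ℝ) with hx
      have hexp : ((k:ℝ) + 1) - (r:ℝ) = x + 1 := by rw [hx]; ring
      rw [hexp, add_pow]
      rw [Finset.sum_range_succ]
      simp only [one_pow, Nat.choose_self, Nat.cast_one, mul_one]
      rw [mul_add, Finset.mul_sum, add_sub_cancel_right]
      apply Finset.sum_congr rfl
      intro i _
      ring
    rw [tsum_congr hptwise]
    rw [Summable.tsum_finsetSum (fun i _ => ((summable_pcm r _ i).mul_left _))]
    apply Finset.sum_congr rfl
    intro i _
    rw [← tsum_mul_left]
  rw [← step3]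
  ring



/-- Centered Gaussian moments with variance `s`, via the recursion. -/
noncomputable def gmom (s : ℝ) : ℕ → ℝ
  | 0 => 1
  | 1 => 0
  | (q+2) => s * (q+1) * gmom s q

lemma tendsto_nat_rpow_neg {e : ℝ} (he : e < 0) :
    Tendsto (fun n : ℕ => (n:ℝ) ^ e) atTop (𝓝 0) := by
  have h : Tendsto (fun x : ℝ => x ^ (-(-e))) atTop (𝓝 0) :=
    tendsto_rpow_neg_atTop (by linarith)
  simpa [Function.comp_def] using h.comp tendsto_natCast_atTop_atTop

lemma pcm_tendsto {σ : ℝ} (hσ : 0 < σ) (r : ℕ → ℝ≥0)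
    (hr : ∀ n : ℕ, ((r n : ℝ≥0) : ℝ) = (n : ℝ) * σ) :
    ∀ q : ℕ, Tendsto (fun n : ℕ => pcm (r n) q / (n:ℝ) ^ ((q:ℝ)/2)) atTop (𝓝 (gmom σ q)) := by
  intro q
  induction q using Nat.strong_induction_on with
  | _ q ih =>
    match q with
    | 0 =>
      simp only [pcm_zero, Nat.cast_zero, zero_div, Real.rpow_zero, div_one, gmom]
      exact tendsto_const_nhds
    | 1 =>
      have h0 : ∀ n : ℕ, pcm (r n) 1 = 0 := by
        intro n
        rw [pcm_rec (r n) 0]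
        simp
      simp only [h0, zero_div, gmom]
      exact tendsto_const_nhds
    | (q+2) =>
      -- eventual equality with a nice sum
      have heq : ∀ᶠ n : ℕ in atTop, pcm (r n) (q+2) / (n:ℝ) ^ (((q+2:ℕ):ℝ)/2)
          = ∑ j ∈ Finset.range (q+1), ((q+1).choose j : ℝ) * σ *
              (pcm (r n) j / (n:ℝ) ^ ((j:ℝ)/2)) * (n:ℝ) ^ (((j:ℝ) - q)/2) := by
        filter_upwards [eventually_ge_atTop 1] with n hn
        have hnpos : (0:ℝ) < (n:ℝ) := by exact_mod_cast hn
        rw [pcm_rec (r n) (q+1), hr n]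
        rw [Finset.mul_sum, Finset.sum_div]
        apply Finset.sum_congr rfl
        intro j hj
        have key : ∀ a b : ℝ, (n:ℝ) ^ a / (n:ℝ) ^ b = (n:ℝ) ^ (a - b) := by
          intro a b
          rw [← Real.rpow_sub hnpos]
        -- LHS : n * σ * (C * pcm_j) / n^((q+2)/2)
        -- RHS : C * σ * (pcm_j / n^(j/2)) * n^((j-q)/2)
        have h1 : (n:ℝ) * σ * (((q+1).choose j : ℝ) * pcm (r n) j) / (n:ℝ) ^ (((q+2:ℕ):ℝ)/2)
            = ((q+1).choose j : ℝ) * σ * pcm (r n) j * ((n:ℝ)^(1:ℝ) / (n:ℝ) ^ (((q+2:ℕ):ℝ)/2)) := by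
          rw [Real.rpow_one]
          ring
        have h2 : ((q+1).choose j : ℝ) * σ * (pcm (r n) j / (n:ℝ) ^ ((j:ℝ)/2)) * (n:ℝ) ^ (((j:ℝ) - q)/2)
            = ((q+1).choose j : ℝ) * σ * pcm (r n) j * ((n:ℝ) ^ (((j:ℝ) - q)/2) / (n:ℝ) ^ ((j:ℝ)/2)) := by
          ring
        rw [h1, h2, key, key]
        congr 2
        push_cast
        ring
      have heq' : (fun n : ℕ => pcm (r n) (q+2) / (n:ℝ) ^ (((q+2:ℕ):ℝ)/2))
          =ᶠ[atTop] (fun n : ℕ => ∑ j ∈ Finset.range (q+1), ((q+1).choose j : ℝ) * σ *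
              (pcm (r n) j / (n:ℝ) ^ ((j:ℝ)/2)) * (n:ℝ) ^ (((j:ℝ) - q)/2)) := heq
      apply Tendsto.congr' heq'.symm
      -- limit of the sum
      have hlim : Tendsto (fun n : ℕ => ∑ j ∈ Finset.range (q+1), ((q+1).choose j : ℝ) * σ *
              (pcm (r n) j / (n:ℝ) ^ ((j:ℝ)/2)) * (n:ℝ) ^ (((j:ℝ) - q)/2)) atTop
          (𝓝 (∑ j ∈ Finset.range (q+1),
            if j = q then ((q+1):ℝ) * σ * gmom σ q else 0)) := by
        apply tendsto_finset_sum
        intro j hj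
        rcases eq_or_lt_of_le (Nat.lt_succ_iff.mp (Finset.mem_range.mp hj)) with hjq | hjq
        · subst hjq
          simp only [if_pos rfl]
          have hexp : (((j:ℝ) - j)/2 : ℝ) = 0 := by ring
          have hfn : (fun n : ℕ => ((j+1).choose j : ℝ) * σ *
              (pcm (r n) j / (n:ℝ) ^ ((j:ℝ)/2)) * (n:ℝ) ^ (((j:ℝ) - j)/2))
              = fun n : ℕ => ((j+1).choose j : ℝ) * σ * (pcm (r n) j / (n:ℝ) ^ ((j:ℝ)/2)) := by
            funext n
            rw [hexp, Real.rpow_zero, mul_one]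
          rw [hfn]
          have hch : (((j+1).choose j : ℕ) : ℝ) = (j:ℝ) + 1 := by
            rw [Nat.choose_succ_self_right]
            push_cast; ring
          have h2 : Tendsto (fun n : ℕ => ((j+1).choose j : ℝ) * σ *
              (pcm (r n) j / (n:ℝ) ^ ((j:ℝ)/2))) atTop
              (𝓝 (((j+1).choose j : ℝ) * σ * gmom σ j)) := by
            have := (ih j (by omega)).const_mul (((j+1).choose j : ℝ) * σ)
            exact this.congr (fun n => by ring)
          rw [hch] at h2
          exact h2.congr (fun n => by rw [hch])
        · simp only [if_neg (by omega : ¬ j = q)]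
          have hexp : (((j:ℝ) - q)/2 : ℝ) < 0 := by
            have : (j:ℝ) < q := by exact_mod_cast hjq
            linarith
          have hA := (ih j (by omega)).const_mul (((q+1).choose j : ℝ) * σ)
          have hB := tendsto_nat_rpow_neg hexp
          have := hA.mul hB
          rw [mul_zero] at this
          exact this.congr (fun n => by ring)
      have hsum : (∑ j ∈ Finset.range (q+1),
            if j = q then ((q+1):ℝ) * σ * gmom σ q else 0) = gmom σ (q+2) := by
        rw [Finset.sum_ite_eq' (Finset.range (q+1)) q (fun _ => ((q+1):ℝ) * σ * gmom σ q)]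
        simp only [Finset.mem_range, lt_add_iff_pos_right, Nat.lt_one_iff, if_pos (by omega : q < q+1)]
        show ((q+1):ℝ) * σ * gmom σ q = gmom σ (q+2)
        simp only [gmom]
        push_cast
        ring
      rw [← hsum]
      exact hlim



lemma integrable_pow_mul_gauss {b : ℝ} (hb : 0 < b) (m : ℕ) :
    Integrable (fun x : ℝ => x ^ m * Real.exp (-b * x^2)) := by
  have h := integrable_rpow_mul_exp_neg_mul_sq hb (s := (m:ℝ))
    (by have := Nat.cast_nonneg (α := ℝ) m; linarith)
  exact h.congr (Filter.Eventually.of_forall (fun x => by simp only [Real.rpow_natCast]))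

lemma integrable_pow_mul_gauss' {σ : ℝ} (hσ : 0 < σ) (K' : ℝ) (m : ℕ) :
    Integrable (fun x : ℝ => K' * (x ^ m * Real.exp (-x^2/(2*σ)))) := by
  have hb : 0 < (2*σ)⁻¹ := by positivity
  have h := (integrable_pow_mul_gauss hb m).const_mul K'
  have harg : ∀ x : ℝ, -(2*σ)⁻¹ * x^2 = -x^2/(2*σ) := fun x => by ring
  exact h.congr (Filter.Eventually.of_forall (fun x => by simp only [harg]))

/-- Integral of `x^p` against the Gaussian density, as a plain integral. -/
lemma gauss_moment_eq (s : ℝ≥0) (hs : s ≠ 0) (p : ℕ) :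
    ∫ x, x ^ p ∂(gaussianReal 0 s) = ∫ x : ℝ, gaussianPDFReal 0 s x * x ^ p := by
  rw [gaussianReal_of_var_ne_zero 0 hs]
  have hd : gaussianPDF 0 s = fun x => ((gaussianPDFReal 0 s x).toNNReal : ℝ≥0∞) := by
    funext x
    rfl
  rw [hd]
  rw [integral_withDensity_eq_integral_smul ((measurable_gaussianPDFReal 0 s).real_toNNReal)]
  apply integral_congr_ae
  filter_upwards with x
  rw [NNReal.smul_def, smul_eq_mul, Real.coe_toNNReal _ (gaussianPDFReal_nonneg 0 s x)]

lemma gauss_moment_rec (s : ℝ≥0) (hs : s ≠ 0) (p : ℕ) :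
    ∫ x, x ^ (p+1) ∂(gaussianReal 0 s)
      = (s:ℝ) * p * ∫ x, x ^ (p-1) ∂(gaussianReal 0 s) := by
  have hσ : 0 < (s:ℝ) := by positivity
  set σ := (s:ℝ)
  set K := (Real.sqrt (2 * Real.pi * σ))⁻¹ with hK
  have hpdf : ∀ x : ℝ, gaussianPDFReal 0 s x = K * Real.exp (-x^2/(2*σ)) := by
    intro x
    rw [gaussianPDFReal, sub_zero]
  -- integration by parts
  have hu : ∀ x : ℝ, HasDerivAt (fun y : ℝ => y ^ p) ((p:ℝ) * x^(p-1)) x :=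
    fun x => hasDerivAt_pow p x
  have hv : ∀ x : ℝ, HasDerivAt (fun y : ℝ => -σ * (K * Real.exp (-y^2/(2*σ))))
      (x * (K * Real.exp (-x^2/(2*σ)))) x := by
    intro x
    have hinner : HasDerivAt (fun y : ℝ => -y^2/(2*σ)) (-(2*x)/(2*σ)) x := by
      have h1 : HasDerivAt (fun y : ℝ => y^2) (2*x) x := by
        simpa using hasDerivAt_pow 2 x
      simpa using ((h1.neg).div_const (2*σ))
    have hfun : (fun y : ℝ => -σ * (K * Real.exp (-y^2/(2*σ))))
        = fun y : ℝ => (-σ * K) * Real.exp (-y^2/(2*σ)) := by funext y; ring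
    rw [hfun]
    have h2 := (hinner.exp).const_mul (-σ * K)
    apply h2.congr_deriv
    field_simp
  have hb : 0 < (2*σ)⁻¹ := by positivity
  have hint1 : Integrable ((fun y : ℝ => y ^ p) * (fun x : ℝ => x * (K * Real.exp (-x^2/(2*σ))))) := by
    have := integrable_pow_mul_gauss' hσ K (p+1)
    exact this.congr (Filter.Eventually.of_forall fun x => by simp only [Pi.mul_apply]; ring)
  have hint2 : Integrable ((fun x : ℝ => (p:ℝ) * x^(p-1)) * (fun y : ℝ => -σ * (K * Real.exp (-y^2/(2*σ))))) := by
    have := integrable_pow_mul_gauss' hσ ((p:ℝ) * (-σ) * K) (p-1)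
    exact this.congr (Filter.Eventually.of_forall fun x => by simp only [Pi.mul_apply]; ring)
  have hint3 : Integrable ((fun y : ℝ => y ^ p) * (fun y : ℝ => -σ * (K * Real.exp (-y^2/(2*σ))))) := by
    have := integrable_pow_mul_gauss' hσ ((-σ) * K) p
    exact this.congr (Filter.Eventually.of_forall fun x => by simp only [Pi.mul_apply]; ring)
  have hibp := integral_mul_deriv_eq_deriv_mul_of_integrable (fun x _ => hu x) (fun x _ => hv x) hint1 hint2 hint3
  rw [gauss_moment_eq s hs (p+1), gauss_moment_eq s hs (p-1)]
  calc ∫ x : ℝ, gaussianPDFReal 0 s x * x ^ (p+1)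
      = ∫ x : ℝ, (fun y : ℝ => y ^ p) x * (x * (K * Real.exp (-x^2/(2*σ)))) := by
        apply integral_congr_ae
        filter_upwards with x
        rw [hpdf x]
        ring
    _ = - ∫ x : ℝ, ((p:ℝ) * x^(p-1)) * (-σ * (K * Real.exp (-x^2/(2*σ)))) := hibp
    _ = σ * p * ∫ x : ℝ, gaussianPDFReal 0 s x * x ^ (p-1) := by
        rw [← integral_neg, ← integral_const_mul (σ * (p:ℝ))]
        apply integral_congr_ae
        filter_upwards with x
        rw [hpdf x]
        ring

lemma gauss_moment_eq_gmom (s : ℝ≥0) (hs : s ≠ 0) :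
    ∀ p : ℕ, ∫ x, x ^ p ∂(gaussianReal 0 s) = gmom (s:ℝ) p := by
  intro p
  induction p using Nat.strong_induction_on with
  | _ p ih =>
    match p with
    | 0 =>
      simp only [pow_zero, gmom]
      rw [integral_const]
      simp
    | 1 =>
      have := gauss_moment_rec s hs 0
      simpa [gmom] using this
    | (p+2) =>
      have h := gauss_moment_rec s hs (p+1)
      simp only [Nat.add_sub_cancel] at h
      rw [h, ih p (by omega)]
      simp only [gmom]
      push_cast
      ring



lemma pcm_def (r : ℝ≥0) (q : ℕ) :
    pcm r q = ∑' k : ℕ, poissonPMFReal r k * ((k:ℝ) - (r:ℝ))^q := rfl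

lemma nat_rpow_half (n : ℕ) (m : ℕ) :
    (n:ℝ) ^ (((m:ℕ):ℝ)/2) = (Real.sqrt (n:ℝ))^m := by
  rw [show (((m:ℕ):ℝ)/2 : ℝ) = (1/2) * m by ring]
  rw [Real.rpow_mul (Nat.cast_nonneg n), ← Real.sqrt_eq_rpow, Real.rpow_natCast]

lemma nat_rpow_neg_half (n : ℕ) (m : ℕ) :
    (n:ℝ) ^ (-((m:ℕ):ℝ)/2) = ((Real.sqrt (n:ℝ))^m)⁻¹ := by
  rw [show (-((m:ℕ):ℝ)/2 : ℝ) = -(((m:ℕ):ℝ)/2) by ring]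
  rw [Real.rpow_neg (Nat.cast_nonneg n), nat_rpow_half]

lemma poisson_integral_expand (θs T : ℝ) (hθ : 0 < θs) (hT : 0 < T) (p : ℕ)
    (n : ℕ) (hn : 1 ≤ n) :
    ∫ k : ℕ, (Real.sqrt (n:ℕ) * ((((k:ℕ):ℝ) / ((n:ℕ) * T)) ^ 2 - θs)) ^ p
        ∂(poissonMeasure (((n : ℝ) * Real.sqrt θs * T).toNNReal))
      = ∑ i ∈ Finset.range (p+1), (p.choose i : ℝ)
          * ((2*(Real.sqrt θs * T))^(p-i) / T^(2*p))
          * (pcm (((n : ℝ) * Real.sqrt θs * T).toNNReal) (p+i) / (n:ℝ)^(((p+i:ℕ):ℝ)/2))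
          * (n:ℝ)^(-((i:ℕ):ℝ)/2) := by
  set r : ℝ≥0 := ((n : ℝ) * Real.sqrt θs * T).toNNReal with hrdef
  set s : ℝ := Real.sqrt θs with hsdef
  set E : ℝ := Real.sqrt (n:ℝ) with hEdef
  have hnpos : (0:ℝ) < (n:ℝ) := by exact_mod_cast hn
  have hE2 : E^2 = (n:ℝ) := Real.sq_sqrt (Nat.cast_nonneg n)
  have hEpos : 0 < E := Real.sqrt_pos.mpr hnpos
  have hEne : E ≠ 0 := hEpos.ne'
  have hTne : T ≠ 0 := hT.ne'
  have hspos : 0 < s := Real.sqrt_pos.mpr hθ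
  have hθs : θs = s^2 := (Real.sq_sqrt hθ.le).symm
  have hrc : ((r:ℝ≥0):ℝ) = (n:ℝ) * s * T := by
    rw [hrdef]
    exact Real.coe_toNNReal _ (by positivity)
  -- pointwise expansion of the integrand
  have hptw : ∀ k : ℕ,
      (E * ((((k:ℕ):ℝ) / ((n:ℕ) * T)) ^ 2 - θs)) ^ p
        = ∑ i ∈ Finset.range (p+1),
            ((p.choose i : ℝ) * ((2*(s * T))^(p-i) / T^(2*p)) / (E^(p+i) * E^i))
              * (((k:ℕ):ℝ) - (r:ℝ))^(p+i) := by
    intro k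
    have hy : E * ((((k:ℕ):ℝ) / ((n:ℕ) * T)) ^ 2 - θs)
        = (1/(E^3*T^2)) * (((k:ℕ):ℝ) - (r:ℝ))^2
          + (2*(s*T)/(E*T^2)) * (((k:ℕ):ℝ) - (r:ℝ)) := by
      rw [hrc, hθs, ← hE2]
      field_simp
      ring
    rw [hy, add_pow]
    apply Finset.sum_congr rfl
    intro i hi
    have hip : i ≤ p := Nat.lt_succ_iff.mp (Finset.mem_range.mp hi)
    obtain ⟨j, rfl⟩ := Nat.exists_eq_add_of_le hip
    rw [Nat.add_sub_cancel_left]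
    set y : ℝ := ((k:ℕ):ℝ) - (r:ℝ) with hydef
    set A : ℝ := 1/(E^3*T^2) with hA
    set B : ℝ := 2*(s*T)/(E*T^2) with hB
    rw [show i + j + i = 2*i + j from by omega]
    calc (A * y^2)^i * (B*y)^j * ((i+j).choose i : ℝ)
        = (A^i * B^j * ((i+j).choose i : ℝ)) * ((y^2)^i * y^j) := by
          rw [mul_pow, mul_pow]; ring
      _ = (A^i * B^j * ((i+j).choose i : ℝ)) * y^(2*i + j) := by
          rw [← pow_mul, ← pow_add]
      _ = ((i+j).choose i : ℝ) * ((2*(s * T))^j / T^(2*(i+j))) / (E^(2*i+j) * E^i)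
            * y^(2*i+j) := by
          have h1 : (E:ℝ)^(2*i+j) ≠ 0 := pow_ne_zero _ hEne
          have h2 : (E:ℝ)^i ≠ 0 := pow_ne_zero _ hEne
          have hAB : A^i * B^j = (2*(s*T))^j / T^(2*(i+j)) / (E^(2*i+j) * E^i) := by
            rw [hA, hB]
            rw [div_pow, div_pow, one_pow, mul_pow (E^3) (T^2), mul_pow E (T^2),
              ← pow_mul E 3 i, ← pow_mul T 2 i, ← pow_mul T 2 j, div_mul_div_comm]
            rw [div_div]
            rw [div_eq_div_iff (by positivity) (by positivity)]
            rw [show 2*(i+j) = 2*i + 2*j from by ring, show 3*i = 2*i + i from by ring,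
              show 2*i+j = 2*i + j from rfl, pow_add T (2*i) (2*j), pow_add E (2*i) i,
              pow_add E (2*i) j]
            ring
          rw [hAB]
          ring
  rw [integral_congr_ae (Filter.Eventually.of_forall hptw)]
  rw [integral_finset_sum _ (fun i _ => integrable_poisson_const_mul_sub_pow r _ _ _)]
  apply Finset.sum_congr rfl
  intro i hi
  rw [integral_poisson_sub_pow r _ _ _, ← pcm_def r (p+i)]
  rw [nat_rpow_half n (p+i), nat_rpow_neg_half n i, ← hEdef]
  ring



end ToyMLE

open ToyMLE in
/-- Convergence of moments for the MLE of the toy parametric model: for every `p ≥ 1`, the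
`p`-th moment of `√n·((X_n/(nT))² − θ*)`, where `X_n` is Poisson with parameter `n·√θ*·T`,
converges to the `p`-th moment of the centered Gaussian measure with variance `4·θ*^{3/2}/T`. -/
theorem toy_model_mle_moment_convergence
    (θs T : ℝ) (hθ : 0 < θs) (hT : 0 < T) :
    ∀ p : ℕ, 1 ≤ p →
      Tendsto (fun nn : ℕ =>
          ∫ k, (Real.sqrt nn * (((k : ℝ) / (nn * T)) ^ 2 - θs)) ^ p
            ∂(poissonMeasure (((nn : ℝ) * Real.sqrt θs * T).toNNReal)))
        atTop
        (𝓝 (∫ x, x ^ p ∂(gaussianReal 0 ((4 * θs ^ ((3:ℝ)/2) / T).toNNReal)))) := by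
  intro p hp
  set σ₀ : ℝ := Real.sqrt θs * T with hσ₀def
  have hsθ : 0 < Real.sqrt θs := Real.sqrt_pos.mpr hθ
  have hσ₀ : 0 < σ₀ := by positivity
  set c : ℝ := 2 * σ₀ / T^2 with hcdef
  have hTne : T ≠ 0 := hT.ne'
  -- Gaussian side
  have hVeq : ((4 * θs ^ ((3:ℝ)/2) / T).toNNReal)
      = (NNReal.mk (c^2) (sq_nonneg c) * σ₀.toNNReal : ℝ≥0) := by
    apply NNReal.coe_injective
    have hrpow : θs ^ ((3:ℝ)/2) = θs * Real.sqrt θs := by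
      rw [show ((3:ℝ)/2 : ℝ) = 1 + 1/2 by norm_num, Real.rpow_add hθ, Real.rpow_one,
        ← Real.sqrt_eq_rpow]
    have h1 : (0:ℝ) ≤ 4 * θs ^ ((3:ℝ)/2) / T := by
      rw [hrpow]; positivity
    rw [NNReal.coe_mul, Real.coe_toNNReal _ h1, Real.coe_toNNReal _ hσ₀.le]
    show 4 * θs ^ ((3:ℝ)/2) / T = c^2 * σ₀
    rw [hrpow, hcdef, hσ₀def]
    have hθeq : θs = Real.sqrt θs ^ 2 := (Real.sq_sqrt hθ.le).symm
    field_simp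
    linear_combination 4 * hθeq
  have hs₀ne : σ₀.toNNReal ≠ 0 := by
    simp only [ne_eq, Real.toNNReal_eq_zero, not_le]
    exact hσ₀
  have hs₀coe : ((σ₀.toNNReal : ℝ≥0) : ℝ) = σ₀ := Real.coe_toNNReal _ hσ₀.le
  have hgauss : ∫ x, x ^ p ∂(gaussianReal 0 ((4 * θs ^ ((3:ℝ)/2) / T).toNNReal))
      = c^p * gmom σ₀ p := by
    rw [hVeq]
    have hmap := gaussianReal_map_const_mul (μ := 0) (v := σ₀.toNNReal) c
    rw [mul_zero] at hmap
    rw [← hmap]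
    rw [integral_map (by fun_prop) (by fun_prop)]
    simp only [mul_pow]
    rw [integral_const_mul, gauss_moment_eq_gmom _ hs₀ne p, hs₀coe]
  rw [hgauss]
  -- Poisson side
  have hr : ∀ n : ℕ, (((((n:ℝ) * Real.sqrt θs * T).toNNReal : ℝ≥0)) : ℝ) = (n:ℝ) * σ₀ := by
    intro n
    rw [Real.coe_toNNReal _ (by positivity), hσ₀def, mul_assoc]
  have hpcm := pcm_tendsto hσ₀ (fun n => (((n:ℝ) * Real.sqrt θs * T).toNNReal)) hr
  -- limit of the expansion
  have hlim : Tendsto (fun n : ℕ => ∑ i ∈ Finset.range (p+1), (p.choose i : ℝ)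
          * ((2*σ₀)^(p-i) / T^(2*p))
          * (pcm (((n : ℝ) * Real.sqrt θs * T).toNNReal) (p+i) / (n:ℝ)^(((p+i:ℕ):ℝ)/2))
          * (n:ℝ)^(-((i:ℕ):ℝ)/2)) atTop
      (𝓝 (∑ i ∈ Finset.range (p+1),
        if i = 0 then ((2*σ₀)^p / T^(2*p)) * gmom σ₀ p else 0)) := by
    apply tendsto_finset_sum
    intro i hi
    rcases Nat.eq_zero_or_pos i with hi0 | hi0
    · subst hi0
      simp only [if_pos rfl]
      have hfn : (fun n : ℕ => (p.choose 0 : ℝ)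
          * ((2*σ₀)^(p-0) / T^(2*p))
          * (pcm (((n : ℝ) * Real.sqrt θs * T).toNNReal) (p+0) / (n:ℝ)^(((p+0:ℕ):ℝ)/2))
          * (n:ℝ)^(-((0:ℕ):ℝ)/2))
          = fun n : ℕ => ((2*σ₀)^p / T^(2*p))
              * (pcm (((n : ℝ) * Real.sqrt θs * T).toNNReal) p / (n:ℝ)^(((p:ℕ):ℝ)/2)) := by
        funext n
        rw [show (-((0:ℕ):ℝ)/2 : ℝ) = 0 by norm_num, Real.rpow_zero]
        simp [Nat.add_zero]
      rw [hfn]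
      exact (hpcm p).const_mul _
    · simp only [if_neg (by omega : ¬ i = 0)]
      have hA := (hpcm (p+i)).const_mul ((p.choose i : ℝ) * ((2*σ₀)^(p-i) / T^(2*p)))
      have hB : Tendsto (fun n : ℕ => (n:ℝ)^(-((i:ℕ):ℝ)/2)) atTop (𝓝 0) := by
        have he : (-((i:ℕ):ℝ)/2 : ℝ) < 0 := by
          have : (0:ℝ) < (i:ℝ) := by exact_mod_cast hi0
          linarith
        have h := tendsto_rpow_neg_atTop (y := ((i:ℕ):ℝ)/2) (by positivity)
        have h2 := h.comp (tendsto_natCast_atTop_atTop (R := ℝ))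
        apply h2.congr
        intro n
        simp only [Function.comp_apply]
        congr 1
        ring
      have := hA.mul hB
      rw [mul_zero] at this
      exact this.congr (fun n => by ring)
  have hsum : (∑ i ∈ Finset.range (p+1),
        if i = 0 then ((2*σ₀)^p / T^(2*p)) * gmom σ₀ p else 0)
      = c^p * gmom σ₀ p := by
    rw [Finset.sum_ite_eq' (Finset.range (p+1)) 0 (fun _ => ((2*σ₀)^p / T^(2*p)) * gmom σ₀ p)]
    rw [if_pos (Finset.mem_range.mpr (by omega))]
    congr 1
    rw [hcdef, div_pow, ← pow_mul, mul_comm 2 p]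
  rw [← hsum]
  apply Tendsto.congr' _ hlim
  filter_upwards [eventually_ge_atTop 1] with n hn
  exact (poisson_integral_expand θs T hθ hT p n hn).symm
end

section
/- Let λ > 0 and let p > 1 be a real number. For t > 0, let X_t be an ℕ-valued random variable with Poisson distribution of parameter λ·t. Then E[|X_t − λt|^p]/t → λ as t → 0+; that is, the p-th absolute central moment of a Poisson variable with small mean is asymptotically linear in t, with slope λ, regardless of the value of p. -/
open Filter Topology

/-- For a Poisson variable `X_t` with parameter `λ·t`, the `p`-th absolute central moment
`E[|X_t − λt|^p] = Σ_k |k − λt|^p·exp(−λt)·(λt)^k/k!` satisfies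
`E[|X_t − λt|^p]/t → λ` as `t → 0⁺`, for every real `p > 1`. -/
theorem poisson_small_time_central_moment
    (lam : ℝ) (hlam : 0 < lam) (p : ℝ) (hp : 1 < p) :
    Tendsto (fun t : ℝ =>
        (∑' k : ℕ, |(k : ℝ) - lam * t| ^ p *
          (Real.exp (-(lam * t)) * (lam * t) ^ k / Nat.factorial k)) / t)
      (𝓝[>] 0) (𝓝 lam) := by
  have hp0 : (0:ℝ) ≤ p := by linarith
  have h2p : (0:ℝ) < 2 ^ p := Real.rpow_pos_of_pos (by norm_num) p
  set c : ℝ := 2 ^ p * lam with hc_def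
  have hc : 0 < c := mul_pos h2p hlam
  set f : ℝ → ℕ → ℝ := fun t k => |(k : ℝ) - lam * t| ^ p *
      (Real.exp (-(lam * t)) * (lam * t) ^ k / Nat.factorial k) with hf_def
  have hf_nonneg : ∀ t : ℝ, 0 < t → ∀ k, 0 ≤ f t k := by
    intro t ht k
    apply mul_nonneg (Real.rpow_nonneg (abs_nonneg _) p)
    apply div_nonneg _ (Nat.cast_nonneg _)
    exact mul_nonneg (Real.exp_nonneg _) (pow_nonneg (by positivity) k)
  -- pointwise bound by geometric terms
  have hbound : ∀ t : ℝ, 0 < t → lam * t ≤ 1 → ∀ k, f t k ≤ 2 ^ p * (c * t) ^ k := by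
    intro t ht ht1 k
    have hlt : (0:ℝ) ≤ lam * t := by positivity
    have hk2 : (k:ℝ) + 1 ≤ 2 ^ (k+1) := by
      have := Nat.lt_two_pow_self (n := k+1)
      have : ((k+1 : ℕ) : ℝ) ≤ ((2 ^ (k+1) : ℕ) : ℝ) := by exact_mod_cast this.le
      push_cast at this
      linarith
    have h1 : |(k:ℝ) - lam * t| ≤ (2:ℝ) ^ (k+1) := by
      rw [abs_le]
      constructor
      · have : (0:ℝ) < 2 ^ (k+1) := by positivity
        nlinarith [Nat.cast_nonneg (α := ℝ) k]
      · nlinarith [Nat.cast_nonneg (α := ℝ) k]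
    have hA : |(k:ℝ) - lam * t| ^ p ≤ ((2:ℝ) ^ (k+1)) ^ p :=
      Real.rpow_le_rpow (abs_nonneg _) h1 hp0
    have hA2 : ((2:ℝ) ^ (k+1)) ^ p = 2 ^ p * ((2:ℝ) ^ p) ^ k := by
      rw [← Real.rpow_natCast (2:ℝ) (k+1), ← Real.rpow_mul (by norm_num),
        mul_comm ((k+1 : ℕ) : ℝ) p, Real.rpow_mul (by norm_num), Real.rpow_natCast,
        pow_succ, mul_comm]
    have hB : Real.exp (-(lam * t)) * (lam * t) ^ k / Nat.factorial k ≤ (lam * t) ^ k := by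
      have he : Real.exp (-(lam * t)) ≤ 1 := Real.exp_le_one_iff.mpr (by linarith)
      have hfac : (1:ℝ) ≤ (Nat.factorial k : ℝ) := by exact_mod_cast (Nat.factorial_pos k)
      calc Real.exp (-(lam * t)) * (lam * t) ^ k / Nat.factorial k
          ≤ Real.exp (-(lam * t)) * (lam * t) ^ k :=
            div_le_self (mul_nonneg (Real.exp_nonneg _) (pow_nonneg hlt k)) hfac
        _ ≤ 1 * (lam * t) ^ k := by
            apply mul_le_mul_of_nonneg_right he (pow_nonneg hlt k)
        _ = (lam * t) ^ k := one_mul _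
    calc f t k ≤ (2 ^ p * ((2:ℝ) ^ p) ^ k) * (lam * t) ^ k := by
          rw [← hA2]
          exact mul_le_mul hA hB (by
            apply div_nonneg _ (Nat.cast_nonneg _)
            exact mul_nonneg (Real.exp_nonneg _) (pow_nonneg hlt k)) (by positivity)
      _ = 2 ^ p * (c * t) ^ k := by
          rw [mul_assoc, ← mul_pow]
          rw [hc_def]
          ring_nf
  -- main eventual bounds
  set L : ℝ → ℝ := fun t => |1 - lam * t| ^ p * Real.exp (-(lam * t)) * lam with hL_def
  set U : ℝ → ℝ := fun t => (lam * t) ^ p / t + L t + 2 ^ p * 2 * c ^ 2 * t with hU_def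
  have hmem : ∀ᶠ t in 𝓝[>] (0:ℝ), t ∈ Set.Ioo (0:ℝ) (min (1/lam) (1/(2*c))) := by
    apply Ioo_mem_nhdsGT_of_mem
    constructor
    · exact le_refl 0
    · positivity
  have hkey : ∀ t : ℝ, t ∈ Set.Ioo (0:ℝ) (min (1/lam) (1/(2*c))) →
      L t ≤ (∑' k, f t k) / t ∧ (∑' k, f t k) / t ≤ U t := by
    intro t ⟨ht, htm⟩
    have ht1 : lam * t ≤ 1 := by
      have := lt_min_iff.mp htm
      have h := this.1
      rw [lt_div_iff₀ hlam] at h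
      linarith
    have htc : c * t ≤ 1/2 := by
      have := lt_min_iff.mp htm
      have h := this.2
      rw [lt_div_iff₀ (by positivity : (0:ℝ) < 2*c)] at h
      nlinarith
    have hct0 : (0:ℝ) ≤ c * t := by positivity
    have hct1 : c * t < 1 := by linarith
    have hgsum : Summable (fun k : ℕ => 2 ^ p * (c * t) ^ k) :=
      (summable_geometric_of_lt_one hct0 hct1).mul_left _
    have hsum : Summable (f t) :=
      Summable.of_nonneg_of_le (hf_nonneg t ht) (hbound t ht ht1) hgsum
    have hf1 : f t 1 = L t * t := by
      simp only [hf_def, hL_def, Nat.cast_one, Nat.factorial_one, pow_one]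
      push_cast
      ring
    constructor
    · -- lower bound
      have h1 : f t 1 ≤ ∑' k, f t k := Summable.le_tsum hsum 1 (fun j _ => hf_nonneg t ht j)
      rw [hf1] at h1
      calc L t = L t * t / t := by field_simp
        _ ≤ (∑' k, f t k) / t := by gcongr
    · -- upper bound
      have hsum1 : Summable (fun k => f t (k+1)) := (summable_nat_add_iff 1).mpr hsum
      have hsum2 : Summable (fun k => f t (k+2)) := (summable_nat_add_iff 2).mpr hsum
      have hsplit : ∑' k, f t k = f t 0 + (f t 1 + ∑' k, f t (k+2)) := by
        rw [Summable.tsum_eq_zero_add hsum, Summable.tsum_eq_zero_add hsum1]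
      have hf0 : f t 0 ≤ (lam * t) ^ p := by
        simp only [hf_def, Nat.cast_zero, Nat.factorial_zero, pow_zero, Nat.cast_one,
          zero_sub, abs_neg, abs_of_nonneg (by positivity : (0:ℝ) ≤ lam * t)]
        have he : Real.exp (-(lam * t)) ≤ 1 := Real.exp_le_one_iff.mpr (by nlinarith)
        calc (lam * t) ^ p * (Real.exp (-(lam * t)) * 1 / 1)
            ≤ (lam * t) ^ p * 1 := by
              apply mul_le_mul_of_nonneg_left _ (Real.rpow_nonneg (by positivity) p)
              simp [he]
          _ = (lam * t) ^ p := mul_one _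
      have htail : ∑' k, f t (k+2) ≤ 2 ^ p * 2 * c ^ 2 * t ^ 2 := by
        have hb2 : ∀ k, f t (k+2) ≤ (2 ^ p * (c*t)^2) * (c * t) ^ k := by
          intro k
          calc f t (k+2) ≤ 2 ^ p * (c * t) ^ (k+2) := hbound t ht ht1 (k+2)
            _ = (2 ^ p * (c*t)^2) * (c * t) ^ k := by ring
        have hgsum2 : Summable (fun k : ℕ => (2 ^ p * (c*t)^2) * (c * t) ^ k) :=
          (summable_geometric_of_lt_one hct0 hct1).mul_left _
        calc ∑' k, f t (k+2) ≤ ∑' k, (2 ^ p * (c*t)^2) * (c * t) ^ k :=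
              Summable.tsum_le_tsum hb2 hsum2 hgsum2
          _ = (2 ^ p * (c*t)^2) * (1 - c*t)⁻¹ := by
              rw [tsum_mul_left, tsum_geometric_of_lt_one hct0 hct1]
          _ ≤ (2 ^ p * (c*t)^2) * 2 := by
              apply mul_le_mul_of_nonneg_left _ (by positivity)
              rw [inv_le_comm₀ (by linarith) (by norm_num)]
              linarith
          _ = 2 ^ p * 2 * c ^ 2 * t ^ 2 := by ring
      calc (∑' k, f t k) / t ≤ ((lam*t)^p + (L t * t + 2 ^ p * 2 * c ^ 2 * t ^ 2)) / t := by
            gcongr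
            rw [hsplit, hf1]
            gcongr
        _ = U t := by
            simp only [hU_def]
            field_simp
            ring
  -- limits of L and U
  have hLtendsto : Tendsto L (𝓝[>] 0) (𝓝 lam) := by
    have h1 : Tendsto (fun t : ℝ => |1 - lam * t|) (𝓝 0) (𝓝 1) := by
      have hcont : Continuous (fun t : ℝ => |1 - lam * t|) :=
        (continuous_const.sub (continuous_const.mul continuous_id)).abs
      have := hcont.tendsto 0
      simpa using this
    have h2 : Tendsto (fun t : ℝ => |1 - lam * t| ^ p) (𝓝 0) (𝓝 1) := by
      have hc1 : ContinuousAt (fun x : ℝ => x ^ p) 1 :=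
        Real.continuousAt_rpow_const 1 p (Or.inl one_ne_zero)
      have := hc1.tendsto.comp h1
      simpa [Real.one_rpow, Function.comp_def] using this
    have h3 : Tendsto (fun t : ℝ => Real.exp (-(lam * t))) (𝓝 0) (𝓝 1) := by
      have hcont : Continuous (fun t : ℝ => Real.exp (-(lam * t))) :=
        Real.continuous_exp.comp (continuous_const.mul continuous_id).neg
      have := hcont.tendsto 0
      simpa using this
    have h4 : Tendsto L (𝓝 0) (𝓝 lam) := by
      have := (h2.mul h3).mul_const lam
      simpa [hL_def] using this
    exact h4.mono_left nhdsWithin_le_nhds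
  have hUtendsto : Tendsto U (𝓝[>] 0) (𝓝 lam) := by
    have h1 : Tendsto (fun t : ℝ => (lam * t) ^ p / t) (𝓝[>] 0) (𝓝 0) := by
      have heq : ∀ᶠ t in 𝓝[>] (0:ℝ), lam ^ p * t ^ (p - 1) = (lam * t) ^ p / t := by
        filter_upwards [self_mem_nhdsWithin] with t ht
        have ht : (0:ℝ) < t := ht
        rw [Real.mul_rpow hlam.le ht.le, Real.rpow_sub ht, Real.rpow_one]
        ring
      apply Tendsto.congr' heq
      have h2 : Tendsto (fun t : ℝ => t ^ (p - 1)) (𝓝[>] 0) (𝓝 0) := by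
        have hc1 : ContinuousAt (fun x : ℝ => x ^ (p-1)) 0 :=
          Real.continuousAt_rpow_const 0 (p-1) (Or.inr (by linarith))
        have := hc1.tendsto.mono_left (nhdsWithin_le_nhds (s := Set.Ioi (0:ℝ)))
        simpa [Real.zero_rpow (by linarith : p - 1 ≠ 0)] using this
      have := h2.const_mul (lam ^ p)
      simpa using this
    have h3 : Tendsto (fun t : ℝ => 2 ^ p * 2 * c ^ 2 * t) (𝓝[>] 0) (𝓝 0) := by
      have hcont : Continuous (fun t : ℝ => 2 ^ p * 2 * c ^ 2 * t) :=
        continuous_const.mul continuous_id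
      have := (hcont.tendsto 0).mono_left (nhdsWithin_le_nhds (s := Set.Ioi (0:ℝ)))
      simpa using this
    have := (h1.add hLtendsto).add h3
    simpa [hU_def] using this
  refine tendsto_of_tendsto_of_tendsto_of_le_of_le' hLtendsto hUtendsto ?_ ?_
  · filter_upwards [hmem] with t ht
    exact (hkey t ht).1
  · filter_upwards [hmem] with t ht
    exact (hkey t ht).2
end

section
/- Let r ∈ [0,1), and let a, b : ℝ → ℝ be measurable functions with a(s) ≥ 0, b(s) > 0 and a(s)/b(s) ≤ r for all s. Suppose ρ, ρ' : [0,∞) → [0,∞] are measurable and satisfy ρ'(t) = ∫_0^t a(s)·e^{−b(s)·(t−s)}·ρ(s) ds for all t ≥ 0 (integrals taken in [0,∞]). Then for every t ≥ 0: ∫_0^t ρ'(u) du ≤ r·∫_0^t ρ(u) du. -/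
open MeasureTheory Set ENNReal

/-- Key integral bound: `∫_{Ioc s t} a(s) e^{-b(s)(u-s)} du ≤ a(s)/b(s)`. -/
lemma hawkes_inner_bound (a b : ℝ → ℝ) (ha0 : ∀ s, 0 ≤ a s) (hb0 : ∀ s, 0 < b s)
    (s t : ℝ) :
    (∫⁻ u in Ioc s t, ENNReal.ofReal (a s * Real.exp (-(b s) * (u - s)))) ≤
      ENNReal.ofReal (a s / b s) := by
  rcases le_or_gt t s with h | h
  · rw [Ioc_eq_empty (by exact not_lt.2 h)]
    simp [div_nonneg (ha0 s) (hb0 s).le]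
  set c := b s with hc
  have hcpos : 0 < c := hb0 s
  have hcont : Continuous fun u : ℝ => a s * Real.exp (-c * (u - s)) := by
    continuity
  have hint : IntegrableOn (fun u : ℝ => a s * Real.exp (-c * (u - s))) (Ioc s t) := by
    exact (hcont.integrableOn_Icc).mono_set Ioc_subset_Icc_self
  rw [← ofReal_integral_eq_lintegral_ofReal hint
      (Filter.Eventually.of_forall fun u => mul_nonneg (ha0 s) (Real.exp_pos _).le)]
  apply ENNReal.ofReal_le_ofReal
  have hval : ∫ u in Ioc s t, a s * Real.exp (-c * (u - s)) =
      a s * ((1 - Real.exp (-c * (t - s))) / c) := by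
    rw [← intervalIntegral.integral_of_le h.le]
    rw [intervalIntegral.integral_const_mul]
    have hcne : c ≠ 0 := hcpos.ne'
    have h1 : ∫ u in s..t, Real.exp (-c * (u - s)) = ∫ u in (0:ℝ)..(t - s), Real.exp (-c * u) := by
      have := intervalIntegral.integral_comp_sub_right (a := s) (b := t)
        (fun u => Real.exp (-c * u)) s
      simpa using this
    rw [h1]
    have h2 : ∀ u : ℝ, Real.exp (-c * u) = Real.exp (u * -c) := by
      intro u; ring_nf
    simp_rw [h2]
    rw [intervalIntegral.integral_comp_mul_right (fun u => Real.exp u) (neg_ne_zero.2 hcne)]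
    rw [integral_exp]
    simp only [smul_eq_mul, zero_mul]
    rw [Real.exp_zero]
    field_simp
    ring
  rw [hval]
  have he : 0 < Real.exp (-c * (t - s)) := Real.exp_pos _
  have : a s * ((1 - Real.exp (-c * (t - s))) / c) = (a s * (1 - Real.exp (-c * (t - s)))) / c := by
    ring
  rw [this, div_le_div_iff_of_pos_right hcpos]
  nlinarith [ha0 s]

/-- Contraction step in the fixed-point construction of the doubly stochastic Hawkes process:
if `a(s)/b(s) ≤ r < 1` and `ρ'(t) = ∫_0^t a(s)·exp(−b(s)·(t−s))·ρ(s) ds` (integrals in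
`[0,∞]`), then `∫_0^t ρ'(u) du ≤ r·∫_0^t ρ(u) du` for every `t ≥ 0`. -/
theorem hawkes_fixed_point_contraction
    (r : ℝ) (hr0 : 0 ≤ r) (hr1 : r < 1)
    (a b : ℝ → ℝ) (ham : Measurable a) (hbm : Measurable b)
    (ha0 : ∀ s, 0 ≤ a s) (hb0 : ∀ s, 0 < b s) (hab : ∀ s, a s / b s ≤ r)
    (ρ ρ' : ℝ → ℝ≥0∞) (hρ : Measurable ρ)
    (hρ' : ∀ t ≥ (0:ℝ), ρ' t =
      ∫⁻ s in Ioc (0:ℝ) t, ENNReal.ofReal (a s * Real.exp (-(b s) * (t - s))) * ρ s) :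
    ∀ t ≥ (0:ℝ),
      (∫⁻ u in Ioc (0:ℝ) t, ρ' u) ≤ ENNReal.ofReal r * ∫⁻ u in Ioc (0:ℝ) t, ρ u := by
  intro t ht
  set g : ℝ → ℝ → ℝ≥0∞ :=
    fun s u => ENNReal.ofReal (a s * Real.exp (-(b s) * (u - s))) * ρ s with hg
  have hgm : Measurable fun p : ℝ × ℝ => g p.2 p.1 := by
    apply Measurable.mul
    · apply Measurable.ennreal_ofReal
      exact (ham.comp measurable_snd).mul
        ((Real.measurable_exp).comp (((hbm.comp measurable_snd).neg).mul
          (measurable_fst.sub measurable_snd)))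
    · exact hρ.comp measurable_snd
  set F : ℝ → ℝ → ℝ≥0∞ := fun u s => (Iic u).indicator (fun s' => g s' u) s with hF
  have hFm : Measurable fun p : ℝ × ℝ => F p.1 p.2 := by
    have : (fun p : ℝ × ℝ => F p.1 p.2) =
        fun p : ℝ × ℝ => if p.2 ≤ p.1 then g p.2 p.1 else 0 := by
      funext p
      simp [hF, Set.indicator_apply, Set.mem_Iic]
    rw [this]
    exact Measurable.ite (measurableSet_le measurable_snd measurable_fst) hgm measurable_const
  -- Step 1: rewrite the integrand
  have step1 : (∫⁻ u in Ioc (0:ℝ) t, ρ' u) =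
      ∫⁻ u in Ioc (0:ℝ) t, ∫⁻ s in Ioc (0:ℝ) t, F u s := by
    apply setLIntegral_congr_fun measurableSet_Ioc
    intro u hu
    rw [hρ' u hu.1.le]
    rw [hF]
    simp only
    rw [lintegral_indicator measurableSet_Iic, Measure.restrict_restrict measurableSet_Iic]
    congr 1
    rw [Set.inter_comm, Set.Ioc_inter_Iic, min_eq_right hu.2]
  -- Step 2: Tonelli
  have step2 : (∫⁻ u in Ioc (0:ℝ) t, ∫⁻ s in Ioc (0:ℝ) t, F u s) =
      ∫⁻ s in Ioc (0:ℝ) t, ∫⁻ u in Ioc (0:ℝ) t, F u s :=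
    lintegral_lintegral_swap hFm.aemeasurable
  rw [step1, step2]
  -- Step 3: bound the inner integral
  have step3 : ∀ s ∈ Ioc (0:ℝ) t,
      (∫⁻ u in Ioc (0:ℝ) t, F u s) ≤ ENNReal.ofReal r * ρ s := by
    intro s hs
    have heq : (∫⁻ u in Ioc (0:ℝ) t, F u s) = ∫⁻ u in Ioc s t, g s u := by
      rw [hF]
      simp only
      have : ∀ u : ℝ, (Iic u).indicator (fun s' => g s' u) s = (Ici s).indicator (g s) u := by
        intro u
        by_cases h : s ≤ u <;> simp [Set.indicator_apply, Set.mem_Iic, Set.mem_Ici, h]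
      simp_rw [this]
      rw [lintegral_indicator measurableSet_Ici, Measure.restrict_restrict measurableSet_Ici]
      have hset : Ici s ∩ Ioc 0 t = Icc s t := by
        ext x
        simp only [mem_inter_iff, mem_Ici, mem_Ioc, mem_Icc]
        constructor
        · rintro ⟨h1, _, h3⟩; exact ⟨h1, h3⟩
        · rintro ⟨h1, h2⟩; exact ⟨h1, lt_of_lt_of_le hs.1 h1, h2⟩
      rw [hset, ← Measure.restrict_congr_set Ioc_ae_eq_Icc]
    rw [heq, hg]
    simp only
    rw [lintegral_mul_const _ (by
      apply Measurable.ennreal_ofReal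
      exact measurable_const.mul
        (Real.measurable_exp.comp (measurable_const.mul (measurable_id.sub measurable_const))))]
    calc (∫⁻ u in Ioc s t, ENNReal.ofReal (a s * Real.exp (-(b s) * (u - s)))) * ρ s
        ≤ ENNReal.ofReal (a s / b s) * ρ s := by
          gcongr
          exact hawkes_inner_bound a b ha0 hb0 s t
      _ ≤ ENNReal.ofReal r * ρ s := by
          gcongr
          exact hab s
  calc (∫⁻ s in Ioc (0:ℝ) t, ∫⁻ u in Ioc (0:ℝ) t, F u s)
      ≤ ∫⁻ s in Ioc (0:ℝ) t, ENNReal.ofReal r * ρ s :=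
        setLIntegral_mono_ae (by fun_prop)
          (Filter.Eventually.of_forall step3)
    _ = ENNReal.ofReal r * ∫⁻ s in Ioc (0:ℝ) t, ρ s := lintegral_const_mul _ hρ
end
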